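/- For any n-bit string x with OneMax value m = Om(x), the expected positive fitness gain of flipping ℓ uniformly random distinct bits, E[max{Om(mut_ℓ(x)) - Om(x), 0}], equals the sum over i from ⌈ℓ/2⌉ to ℓ of C(n-m, i)·C(m, ℓ-i)·(2i-ℓ)/C(n, ℓ). -/

import Mathlib

/-- Number of ones among the first `n` bits of `x`. -/
def om (n : ℕ) (x : ℕ → Bool) : ℕ :=
  ((Finset.range n).filter (fun i => x i = true)).card

/-- Flip the bits of `x` at the positions in `S`. -/
def flipS (S : Finset ℕ) (x : ℕ → Bool) : ℕ → Bool :=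
  fun i => if i ∈ S then !(x i) else x i

lemma om_flip_sub (n : ℕ) (x : ℕ → Bool) (S : Finset ℕ) (hS : S ⊆ Finset.range n) :
    om n (flipS S x) - om n x
      = 2 * (S.filter (fun i => x i = false)).card - S.card := by
  classical
  set a := (S.filter (fun i => x i = false)).card with ha
  set b := (S.filter (fun i => x i = true)).card with hb
  have hab : a + b = S.card := by
    rw [ha, hb]
    rw [← Finset.card_filter_add_card_filter_not (s := S)
      (p := fun i => x i = false)]
    congr 1
    apply congrArg
    apply Finset.filter_congr
    intro i _
    simp
  have hbm : b ≤ om n x := by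
    apply Finset.card_le_card
    intro i hi
    simp only [Finset.mem_filter] at hi ⊢
    exact ⟨hS hi.1, hi.2⟩
  have hflip : om n (flipS S x) = (om n x - b) + a := by
    unfold om
    have hsplit : (Finset.range n).filter (fun i => flipS S x i = true)
        = ((Finset.range n).filter (fun i => x i = true) \ S)
          ∪ S.filter (fun i => x i = false) := by
      ext i
      simp only [Finset.mem_filter, Finset.mem_union, Finset.mem_sdiff, flipS]
      by_cases hiS : i ∈ S
      · simp [hiS, hS hiS]
      · simp [hiS]
    rw [hsplit, Finset.card_union_of_disjoint]
    · have hOS : ((Finset.range n).filter (fun i => x i = true)) ∩ S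
          = S.filter (fun i => x i = true) := by
        ext i
        simp only [Finset.mem_inter, Finset.mem_filter]
        constructor
        · rintro ⟨⟨_, h⟩, hiS⟩; exact ⟨hiS, h⟩
        · rintro ⟨hiS, h⟩; exact ⟨⟨hS hiS, h⟩, hiS⟩
      have hc := Finset.card_sdiff_add_card_inter
        ((Finset.range n).filter (fun i => x i = true)) S
      rw [hOS] at hc
      unfold om at *
      omega
    · rw [Finset.disjoint_left]
      intro i hi hi'
      simp only [Finset.mem_sdiff, Finset.mem_filter] at hi hi'
      exact hi.2 hi'.1
  rw [hflip]
  omega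


lemma fiber_card (n ℓ i : ℕ) (x : ℕ → Bool) (hi : i ≤ ℓ) :
    (((Finset.range n).powersetCard ℓ).filter
        (fun S => (S.filter (fun j => x j = false)).card = i)).card
      = ((Finset.range n).filter (fun j => x j = false)).card.choose i
        * ((Finset.range n).filter (fun j => x j = true)).card.choose (ℓ - i) := by
  classical
  set Z := (Finset.range n).filter (fun j => x j = false) with hZ
  set O := (Finset.range n).filter (fun j => x j = true) with hO
  rw [← Finset.card_powersetCard, ← Finset.card_powersetCard, ← Finset.card_product]
  apply Finset.card_nbij'
    (i := fun S => (S.filter (fun j => x j = false), S.filter (fun j => x j = true)))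
    (j := fun p => p.1 ∪ p.2)
  · intro S hS
    simp only [Finset.mem_coe, Finset.mem_filter, Finset.mem_powersetCard] at hS
    obtain ⟨⟨hsub, hcard⟩, hfc⟩ := hS
    have hsplit : (S.filter (fun j => x j = false)).card
        + (S.filter (fun j => x j = true)).card = ℓ := by
      rw [← hcard, ← Finset.card_filter_add_card_filter_not (s := S)
        (p := fun j => x j = false)]
      congr 1
      apply congrArg
      apply Finset.filter_congr
      intro j _
      simp
    simp only [Finset.mem_coe, Finset.mem_product, Finset.mem_powersetCard]
    refine ⟨⟨?_, hfc⟩, ?_, by omega⟩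
    · intro j hj
      simp only [Finset.mem_filter, hZ] at hj ⊢
      exact ⟨hsub hj.1, hj.2⟩
    · intro j hj
      simp only [Finset.mem_filter, hO] at hj ⊢
      exact ⟨hsub hj.1, hj.2⟩
  · rintro ⟨A, B⟩ hp
    simp only [Finset.mem_coe, Finset.mem_product, Finset.mem_powersetCard] at hp
    obtain ⟨⟨hAZ, hA⟩, hBO, hB⟩ := hp
    have hAfalse : ∀ j ∈ A, x j = false := fun j hj => (Finset.mem_filter.mp (hAZ hj)).2
    have hBtrue : ∀ j ∈ B, x j = true := fun j hj => (Finset.mem_filter.mp (hBO hj)).2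
    have hdisj : Disjoint A B := by
      rw [Finset.disjoint_left]
      intro j hjA hjB
      have := hAfalse j hjA
      have := hBtrue j hjB
      simp_all
    have hfilter : (A ∪ B).filter (fun j => x j = false) = A := by
      ext j
      simp only [Finset.mem_filter, Finset.mem_union]
      constructor
      · rintro ⟨hj | hj, hf⟩
        · exact hj
        · rw [hBtrue j hj] at hf; simp at hf
      · intro hj; exact ⟨Or.inl hj, hAfalse j hj⟩
    simp only [Finset.mem_coe, Finset.mem_filter, Finset.mem_powersetCard]
    refine ⟨⟨?_, ?_⟩, by rw [hfilter]; exact hA⟩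
    · intro j hj
      rcases Finset.mem_union.mp hj with h | h
      · exact Finset.mem_of_mem_filter j (hAZ h)
      · exact Finset.mem_of_mem_filter j (hBO h)
    · rw [Finset.card_union_of_disjoint hdisj, hA, hB]; omega
  · intro S hS
    simp only
    have heq : S.filter (fun j => x j = true) = S.filter (fun j => ¬ x j = false) :=
      Finset.filter_congr (fun j _ => by simp)
    rw [heq, Finset.filter_union_filter_not_eq]
  · rintro ⟨A, B⟩ hp
    simp only [Finset.mem_coe, Finset.mem_product, Finset.mem_powersetCard] at hp
    obtain ⟨⟨hAZ, hA⟩, hBO, hB⟩ := hp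
    have hAfalse : ∀ j ∈ A, x j = false := fun j hj => (Finset.mem_filter.mp (hAZ hj)).2
    have hBtrue : ∀ j ∈ B, x j = true := fun j hj => (Finset.mem_filter.mp (hBO hj)).2
    have h1 : (A ∪ B).filter (fun j => x j = false) = A := by
      ext j
      simp only [Finset.mem_filter, Finset.mem_union]
      constructor
      · rintro ⟨hj | hj, hf⟩
        · exact hj
        · rw [hBtrue j hj] at hf; simp at hf
      · intro hj; exact ⟨Or.inl hj, hAfalse j hj⟩
    have h2 : (A ∪ B).filter (fun j => x j = true) = B := by
      ext j
      simp only [Finset.mem_filter, Finset.mem_union]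
      constructor
      · rintro ⟨hj | hj, hf⟩
        · rw [hAfalse j hj] at hf; simp at hf
        · exact hj
      · intro hj; exact ⟨Or.inr hj, hBtrue j hj⟩
    simp [h1, h2]

theorem stmt5 (n ℓ : ℕ) (x : ℕ → Bool) (h1 : 1 ≤ ℓ) (h2 : ℓ ≤ n) :
    (∑ S ∈ (Finset.range n).powersetCard ℓ,
        ((om n (flipS S x) - om n x : ℕ) : ℝ)) / (n.choose ℓ : ℝ)
      = ∑ i ∈ Finset.Icc ((ℓ + 1) / 2) ℓ,
          ((n - om n x).choose i : ℝ) * ((om n x).choose (ℓ - i) : ℝ)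
            * ((2 * i - ℓ : ℕ) : ℝ) / (n.choose ℓ : ℝ) := by
  classical
  rw [← Finset.sum_div]
  congr 1
  set m := om n x with hm
  have hZcard : ((Finset.range n).filter (fun j => x j = false)).card = n - m := by
    have h := Finset.card_filter_add_card_filter_not (s := Finset.range n)
      (p := fun j => x j = true)
    have heq : (Finset.range n).filter (fun j => ¬ x j = true)
        = (Finset.range n).filter (fun j => x j = false) :=
      Finset.filter_congr (fun j _ => by simp)
    rw [heq, Finset.card_range] at h
    unfold m
    unfold om
    omega
  have step1 : ∑ S ∈ (Finset.range n).powersetCard ℓ,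
      ((om n (flipS S x) - m : ℕ) : ℝ)
      = ∑ S ∈ (Finset.range n).powersetCard ℓ,
          ((2 * (S.filter (fun j => x j = false)).card - ℓ : ℕ) : ℝ) := by
    apply Finset.sum_congr rfl
    intro S hS
    rw [Finset.mem_powersetCard] at hS
    rw [hm, om_flip_sub n x S hS.1, hS.2]
  rw [step1]
  have hmaps : ∀ S ∈ (Finset.range n).powersetCard ℓ,
      (S.filter (fun j => x j = false)).card ∈ Finset.range (ℓ + 1) := by
    intro S hS
    rw [Finset.mem_powersetCard] at hS
    rw [Finset.mem_range, Nat.lt_succ_iff, ← hS.2]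
    exact Finset.card_le_card (Finset.filter_subset _ _)
  rw [← Finset.sum_fiberwise_of_maps_to hmaps
      (fun S => ((2 * (S.filter (fun j => x j = false)).card - ℓ : ℕ) : ℝ))]
  have step2 : ∀ i ∈ Finset.range (ℓ + 1),
      ∑ S ∈ ((Finset.range n).powersetCard ℓ).filter
          (fun S => (S.filter (fun j => x j = false)).card = i),
        ((2 * (S.filter (fun j => x j = false)).card - ℓ : ℕ) : ℝ)
      = ((n - m).choose i : ℝ) * ((m).choose (ℓ - i) : ℝ) * ((2 * i - ℓ : ℕ) : ℝ) := by
    intro i hi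
    rw [Finset.mem_range, Nat.lt_succ_iff] at hi
    rw [Finset.sum_congr rfl (fun S hS => by
      rw [(Finset.mem_filter.mp hS).2]), Finset.sum_const, nsmul_eq_mul,
      fiber_card n ℓ i x hi, hZcard]
    have hOcard : ((Finset.range n).filter (fun j => x j = true)).card = m := rfl
    rw [hOcard]
    push_cast
    ring
  rw [Finset.sum_congr rfl step2]
  symm
  apply Finset.sum_subset
  · intro i hi
    rw [Finset.mem_Icc] at hi
    rw [Finset.mem_range, Nat.lt_succ_iff]
    exact hi.2
  · intro i hi hni
    rw [Finset.mem_range, Nat.lt_succ_iff] at hi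
    rw [Finset.mem_Icc] at hni
    have : 2 * i - ℓ = 0 := by omega
    rw [this]
    simp
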